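/- arXiv:2001.11139 — 2 statements merged into one kernel-verified Lean document; each statement's English description precedes it below -/
import Mathlib

section
/- Let y, Y : [0,T] → ℝ^m with ‖y(t) − Y(t)‖ ≤ C·h^p for all t ∈ [0,T], and let S : ℝ^m → ℝ be Lipschitz with constant K. Suppose t_t, t_c ∈ (0,T] satisfy S(y(t_t)) = R = S(Y(t_c)), the map t ↦ S(y(t)) is continuously differentiable on an open interval B containing both t_t and t_c, and |d/dt S(y(t))| > M > 0 on B. Then |t_t − t_c| ≤ (K·C/M)·h^p. -/
open Set

theorem first_crossing_time_convergence
    {m : ℕ} (T C K M h R : ℝ) (p : ℕ)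
    (y Y : ℝ → EuclideanSpace ℝ (Fin m)) (S : EuclideanSpace ℝ (Fin m) → ℝ)
    (hh : 0 < h) (hC : 0 < C) (hK : 0 < K) (hM : 0 < M) (hp : 1 ≤ p)
    (hbound : ∀ t ∈ Icc (0 : ℝ) T, ‖y t - Y t‖ ≤ C * h ^ p)
    (hLip : ∀ a b, |S a - S b| ≤ K * ‖a - b‖)
    (t_t t_c : ℝ) (ht_t : t_t ∈ Ioc (0 : ℝ) T) (ht_c : t_c ∈ Ioc (0 : ℝ) T)
    (hcross_t : S (y t_t) = R) (hcross_c : S (Y t_c) = R)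
    (b₁ b₂ : ℝ) (hB_t : t_t ∈ Ioo b₁ b₂) (hB_c : t_c ∈ Ioo b₁ b₂)
    (hS_C1 : ContDiffOn ℝ 1 (fun t => S (y t)) (Ioo b₁ b₂))
    (hderiv : ∀ t ∈ Ioo b₁ b₂, M < |deriv (fun t => S (y t)) t|) :
    |t_t - t_c| ≤ (K * C / M) * h ^ p := by
  have hfd : DifferentiableOn ℝ (fun t => S (y t)) (Ioo b₁ b₂) :=
    hS_C1.differentiableOn one_ne_zero
  have key : |S (y t_t) - S (y t_c)| ≤ K * (C * h ^ p) := by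
    have h1 : S (y t_t) - S (y t_c) = S (Y t_c) - S (y t_c) := by rw [hcross_t, hcross_c]
    rw [h1]
    calc |S (Y t_c) - S (y t_c)| ≤ K * ‖Y t_c - y t_c‖ := hLip _ _
    _ = K * ‖y t_c - Y t_c‖ := by rw [norm_sub_rev]
    _ ≤ K * (C * h ^ p) := by
        have := hbound t_c ⟨le_of_lt ht_c.1, ht_c.2⟩
        nlinarith
  have main : ∀ a b : ℝ, a < b → a ∈ Ioo b₁ b₂ → b ∈ Ioo b₁ b₂ →
      M * (b - a) ≤ |S (y b) - S (y a)| := by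
    intro a b hab ha hb
    have hsub : Icc a b ⊆ Ioo b₁ b₂ := Icc_subset_Ioo ha.1 hb.2
    have hsub2 : Ioo a b ⊆ Ioo b₁ b₂ := Ioo_subset_Icc_self.trans hsub
    obtain ⟨c, hc, hceq⟩ := exists_deriv_eq_slope (fun t => S (y t)) hab
      ((hfd.continuousOn).mono hsub) (hfd.mono hsub2)
    have hM2 := hderiv c (hsub2 hc)
    rw [hceq, abs_div] at hM2
    have hba : 0 < b - a := sub_pos.mpr hab
    rw [abs_of_pos hba] at hM2
    exact le_of_lt ((lt_div_iff₀ hba).mp hM2)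
  rw [div_mul_eq_mul_div, le_div_iff₀ hM]
  rcases lt_trichotomy t_t t_c with hlt | heq | hgt
  · have h1 := main t_t t_c hlt hB_t hB_c
    rw [abs_sub_comm] at h1
    have h3 : |t_t - t_c| = t_c - t_t := by
      rw [abs_sub_comm]; exact abs_of_pos (sub_pos.mpr hlt)
    rw [h3]; nlinarith
  · simp [heq]; positivity
  · have h1 := main t_c t_t hgt hB_c hB_t
    have h3 : |t_t - t_c| = t_t - t_c := abs_of_pos (sub_pos.mpr hgt)
    rw [h3]; nlinarith
end

section
/- Let y, Y : [0,T] → ℝ^m, v ∈ ℝ^m, R ∈ ℝ, and suppose S(w) = v·w. Assume t ↦ S(y(t)) is twice continuously differentiable, f(·,·) is twice continuously differentiable in y, v·y(t_t) = R = v·Y(t_c), and y solves y' = f(y,t). Then, with ε(t) = y(t) − Y(t), there exist remainders R₁ = ½ (d²/dt²)(v·y(·))(ξ)(t_t − t_c)² for some ξ between t_t and t_c, and R₂ = ½(Y(t_c)−y(t_c))ᵀ H_y(v·f(·,t_c))(ζ)(Y(t_c)−y(t_c)) for some ζ between y(t_c) and Y(t_c), such that t_t − t_c = ( −v·ε(t_c)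 − R₁ ) / ( v·f(Y(t_c),t_c) + vᵀ∇_y f(Y(t_c),t_c)·ε(t_c) + R₂ ), provided the denominator is nonzero. -/
open Set RealInnerProductSpace

lemma taylor2_lt {g : ℝ → ℝ} (hg : ContDiff ℝ 2 g) {a b : ℝ} (hab : a < b) :
    ∃ ξ ∈ Ioo a b,
      g b = g a + deriv g a * (b - a) + (1/2) * iteratedDeriv 2 g ξ * (b - a)^2 := by
  have hgd : Differentiable ℝ g := hg.differentiable (by norm_num)
  have h2 : ContDiff ℝ ((1:ℕ) + 1) g := by exact_mod_cast hg
  have hdg : ContDiff ℝ 1 (deriv g) := (contDiff_succ_iff_deriv.mp h2).2.2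
  have hdgd : Differentiable ℝ (deriv g) := hdg.differentiable one_ne_zero
  have hud := uniqueDiffOn_Icc hab
  have hEq : EqOn (iteratedDerivWithin 1 g (Icc a b)) (deriv g) (Icc a b) := by
    intro x hx
    rw [iteratedDerivWithin_one]
    exact (hgd x).derivWithin (hud x hx)
  have hf : ContDiffOn ℝ 1 g (Icc a b) := (hg.of_le (by norm_num)).contDiffOn
  have hf' : DifferentiableOn ℝ (iteratedDerivWithin 1 g (Icc a b)) (Ioo a b) :=
    (hdgd.differentiableOn).congr fun x hx => hEq (Ioo_subset_Icc_self hx)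
  obtain ⟨ξ, hξ, h⟩ := taylor_mean_remainder_lagrange (n := 1) hab.ne (by rwa [uIcc_of_le hab.le]) (by rwa [uIcc_of_le hab.le, uIoo_of_le hab.le])
  rw [uIoo_of_le hab.le] at hξ
  rw [uIcc_of_le hab.le] at h
  refine ⟨ξ, hξ, ?_⟩
  have h1 : iteratedDerivWithin 2 g (Icc a b) ξ = iteratedDeriv 2 g ξ := by
    have hξI := Ioo_subset_Icc_self hξ
    rw [iteratedDerivWithin_succ, derivWithin_congr hEq (hEq hξI),
      (hdgd ξ).derivWithin (hud ξ hξI), iteratedDeriv_succ, iteratedDeriv_one]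
  have h0 : iteratedDerivWithin 1 g (Icc a b) a = deriv g a :=
    hEq (left_mem_Icc.mpr hab.le)
  simp only [taylorWithinEval_succ, taylor_within_zero_eval, h0, h1] at h
  norm_num at h ⊢
  linarith

lemma taylor2 {g : ℝ → ℝ} (hg : ContDiff ℝ 2 g) (a b : ℝ) :
    ∃ ξ ∈ uIcc a b,
      g b = g a + deriv g a * (b - a) + (1/2) * iteratedDeriv 2 g ξ * (b - a)^2 := by
  rcases lt_trichotomy a b with hab | rfl | hab
  · obtain ⟨ξ, hξ, h⟩ := taylor2_lt hg hab
    exact ⟨ξ, Icc_subset_uIcc (Ioo_subset_Icc_self hξ), h⟩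
  · exact ⟨a, left_mem_uIcc, by ring⟩
  · -- reflection
    have hgd : Differentiable ℝ g := hg.differentiable (by norm_num)
    have h2 : ContDiff ℝ ((1:ℕ) + 1) g := by exact_mod_cast hg
    have hdg : ContDiff ℝ 1 (deriv g) := (contDiff_succ_iff_deriv.mp h2).2.2
    have hdgd : Differentiable ℝ (deriv g) := hdg.differentiable one_ne_zero
    set r : ℝ → ℝ := fun t => 2*a - t with hr
    have hrc : ContDiff ℝ 2 r := contDiff_const.sub contDiff_id
    have hrd : ∀ t, HasDerivAt r (-1) t := by
      intro t
      simpa using (hasDerivAt_id t).const_sub (2*a)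
    have hg' : ContDiff ℝ 2 (g ∘ r) := hg.comp hrc
    have hderiv : ∀ t, deriv (g ∘ r) t = -deriv g (r t) := by
      intro t
      have := ((hgd (r t)).hasDerivAt.comp t (hrd t))
      simpa using this.deriv
    have hderiv2 : ∀ t, iteratedDeriv 2 (g ∘ r) t = iteratedDeriv 2 g (r t) := by
      intro t
      rw [iteratedDeriv_succ, iteratedDeriv_one]
      have h1 : deriv (g ∘ r) = fun s => -deriv g (r s) := funext hderiv
      rw [h1]
      have := (((hdgd (r t)).hasDerivAt.comp t (hrd t)).neg).deriv
      change deriv (fun s => -deriv g (r s)) t = _ at this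
      rw [this, iteratedDeriv_succ, iteratedDeriv_one]
      ring
    obtain ⟨ξ', hξ', h⟩ := taylor2_lt hg' (show a < 2*a - b by linarith)
    refine ⟨r ξ', ?_, ?_⟩
    · have : r ξ' ∈ Ioo b a := by
        simp only [hr, mem_Ioo] at hξ' ⊢
        constructor <;> linarith [hξ'.1, hξ'.2]
      exact Icc_subset_uIcc' (Ioo_subset_Icc_self this)
    · have e1 : (g ∘ r) (2*a - b) = g b := by simp [hr, Function.comp]
      have e2 : (g ∘ r) a = g a := by
        simp only [hr, Function.comp]; rw [show 2*a - a = a by ring]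
      have e3 : deriv (g ∘ r) a = -deriv g a := by
        have := hderiv a
        simp only [hr] at this
        rw [this, show 2*a - a = a by ring]
      rw [e1, e2, e3, hderiv2 ξ'] at h
      rw [h]; ring


theorem first_crossing_error_representation
    {m : ℕ} (T R t_t t_c : ℝ)
    (y Y : ℝ → EuclideanSpace ℝ (Fin m))
    (v : EuclideanSpace ℝ (Fin m))
    (f : EuclideanSpace ℝ (Fin m) → ℝ → EuclideanSpace ℝ (Fin m))
    (hy : ∀ t, HasDerivAt y (f (y t) t) t)
    (hf : ∀ t, ContDiff ℝ 2 (fun z => f z t))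
    (hSy : ContDiff ℝ 2 (fun t => ⟪v, y t⟫))
    (hcross_t : ⟪v, y t_t⟫ = R)
    (hcross_c : ⟪v, Y t_c⟫ = R) :
    ∃ ξ ∈ uIcc t_t t_c, ∃ ζ ∈ segment ℝ (y t_c) (Y t_c),
      ∀ R₁ R₂ : ℝ,
        R₁ = (1 / 2) * iteratedDeriv 2 (fun t => ⟪v, y t⟫) ξ * (t_t - t_c) ^ 2 →
        R₂ = (1 / 2) *
              (fderiv ℝ (fun z => (fderiv ℝ (fun w => ⟪v, f w t_c⟫) z) (Y t_c - y t_c)) ζ)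
                (Y t_c - y t_c) →
        (⟪v, f (Y t_c) t_c⟫
            + (fderiv ℝ (fun w => ⟪v, f w t_c⟫) (Y t_c)) (y t_c - Y t_c) + R₂) ≠ 0 →
        t_t - t_c =
          (-(⟪v, y t_c - Y t_c⟫) - R₁) /
            (⟪v, f (Y t_c) t_c⟫
              + (fderiv ℝ (fun w => ⟪v, f w t_c⟫) (Y t_c)) (y t_c - Y t_c) + R₂) := by
  classical
  set h : EuclideanSpace ℝ (Fin m) → ℝ := fun w => ⟪v, f w t_c⟫ with hh
  have hC : ContDiff ℝ 2 h := (innerSL ℝ v).contDiff.comp (hf t_c)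
  set d : EuclideanSpace ℝ (Fin m) := y t_c - Y t_c with hd
  set c : ℝ → EuclideanSpace ℝ (Fin m) := fun s => Y t_c + s • d with hc
  set ψ : EuclideanSpace ℝ (Fin m) → ℝ := fun z => (fderiv ℝ h z) d with hψ
  -- differentiability facts
  have hC2 : ContDiff ℝ ((1:ℕ) + 1) h := by exact_mod_cast hC
  have hfd : ContDiff ℝ 1 (fderiv ℝ h) := (contDiff_succ_iff_fderiv.mp hC2).2.2
  have hψd : Differentiable ℝ ψ :=
    (ContinuousLinearMap.apply ℝ ℝ d).differentiable.comp (hfd.differentiable one_ne_zero)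
  have hcd : ∀ s : ℝ, HasDerivAt c d s := by
    intro s
    simpa [hc] using ((hasDerivAt_id s).smul_const d).const_add (Y t_c)
  have hφ : ContDiff ℝ 2 (fun s => h (c s)) :=
    hC.comp (contDiff_const.add (contDiff_id.smul contDiff_const))
  have hφd : ∀ s : ℝ, HasDerivAt (fun s => h (c s)) ((fderiv ℝ h (c s)) d) s := fun s =>
    ((hC.differentiable (by norm_num) (c s)).hasFDerivAt).comp_hasDerivAt s (hcd s)
  have hderivφ : deriv (fun s => h (c s)) = fun s => (fderiv ℝ h (c s)) d :=
    funext fun s => (hφd s).deriv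
  -- spatial Taylor expansion
  obtain ⟨σ, hσ, hT⟩ := taylor2 hφ 0 1
  set ζ := c σ with hζ
  have hφ2 : iteratedDeriv 2 (fun s => h (c s)) σ = (fderiv ℝ ψ ζ) d := by
    rw [iteratedDeriv_succ, iteratedDeriv_one, hderivφ]
    exact (((hψd ζ).hasFDerivAt).comp_hasDerivAt σ (hcd σ)).deriv
  have hc0 : c 0 = Y t_c := by simp [hc]
  have hc1 : c 1 = y t_c := by simp [hc, hd]
  rw [show (1:ℝ) - 0 = 1 by ring, hc1, hc0, hφ2] at hT
  have hderiv0 : deriv (fun s => h (c s)) 0 = (fderiv ℝ h (Y t_c)) d := by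
    rw [hderivφ]
    show (fderiv ℝ h (c 0)) d = _
    rw [hc0]
  rw [hderiv0] at hT
  -- hT : h (y t_c) = h (Y t_c) + fderiv h (Y t_c) d * 1 + 1/2 * fderiv ψ ζ d * 1 ^ 2
  -- ζ in the segment
  have hσ' : σ ∈ Icc (0:ℝ) 1 := by rwa [uIcc_of_le zero_le_one] at hσ
  have hζseg : ζ ∈ segment ℝ (y t_c) (Y t_c) := by
    refine ⟨σ, 1 - σ, hσ'.1, by linarith [hσ'.2], by ring, ?_⟩
    simp only [hζ, hc, hd]
    module
  -- time Taylor expansion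
  obtain ⟨ξ, hξ, hTt⟩ := taylor2 hSy t_c t_t
  refine ⟨ξ, by rwa [uIcc_comm] at hξ, ζ, hζseg, ?_⟩
  intro R₁ R₂ hR₁ hR₂ hD
  -- identify R₂
  have hR₂' : R₂ = (1/2) * (fderiv ℝ ψ ζ) d := by
    rw [hR₂]
    congr 1
    have e1 : (fun z => (fderiv ℝ (fun w => ⟪v, f w t_c⟫) z) (Y t_c - y t_c))
        = fun z => -ψ z := by
      funext z
      have : Y t_c - y t_c = -d := by rw [hd]; abel
      rw [this]
      simp [hψ, hh]
    rw [e1, fderiv_fun_neg]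
    have : Y t_c - y t_c = -d := by rw [hd]; abel
    rw [this]
    simp
  -- deriv of inner composition
  have hdg : deriv (fun t => ⟪v, y t⟫) t_c = h (y t_c) := by
    have := (innerSL ℝ v).hasFDerivAt.comp_hasDerivAt t_c (hy t_c)
    have h2 : HasDerivAt (fun t => ⟪v, y t⟫) ⟪v, f (y t_c) t_c⟫ t_c := by exact this
    rw [h2.deriv]
  -- assemble
  set D : ℝ := ⟪v, f (Y t_c) t_c⟫
      + (fderiv ℝ (fun w => ⟪v, f w t_c⟫) (Y t_c)) (y t_c - Y t_c) + R₂ with hDdef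
  have hDval : h (y t_c) = D := by
    rw [hDdef, hR₂']
    rw [hT]
    have : (fderiv ℝ (fun w => ⟪v, f w t_c⟫) (Y t_c)) (y t_c - Y t_c)
        = (fderiv ℝ h (Y t_c)) d := by rw [hh, hd]
    rw [this]; ring
  have hnum : -(⟪v, y t_c - Y t_c⟫) = D * (t_t - t_c) + R₁ := by
    have e2 : ⟪v, y t_c - Y t_c⟫ = ⟪v, y t_c⟫ - R := by
      rw [inner_sub_right, hcross_c]
    have e3 : (fun t => ⟪v, y t⟫) t_t = R := hcross_t
    rw [e2]
    have := hTt
    rw [hdg, hDval] at this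
    simp only at this e3
    rw [e3] at this
    rw [hR₁]
    linarith [this]
  rw [hnum]
  field_simp
  ring
end
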